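/- Let F be a field. Suppose x1, x2, x3, u are elements of F satisfying u + x1·x2 = 0, 1 + x2·x3 = 0, and 1 + x3·x1 = 0. Then x3 ≠ 0 and u = −x3⁻². Conversely, for any nonzero y ∈ F, there exist x1, x2, x3 ∈ F satisfying these three equations with u = −y⁻². Hence the set of possible values of u is exactly {−y² : y ∈ F, y ≠ 0}. -/

import Mathlib

/-- The ungraded augmentation variety of the left-handed trefoil.
If `u + x1*x2 = 0`, `1 + x2*x3 = 0`, `1 + x3*x1 = 0` in a field `F`, then
`x3 ≠ 0` and `u = -(x3⁻¹)^2`; conversely every `-(y⁻¹)^2` with `y ≠ 0` arises;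
hence the set of possible `u` is exactly `{-y^2 : y ∈ F*}`. -/
theorem augmentation_left_trefoil_variety (F : Type*) [Field F] :
    (∀ x1 x2 x3 u : F, u + x1 * x2 = 0 → 1 + x2 * x3 = 0 → 1 + x3 * x1 = 0 →
      x3 ≠ 0 ∧ u = -(x3⁻¹) ^ 2) ∧
    (∀ y : F, y ≠ 0 → ∃ x1 x2 x3 : F,
      (-(y⁻¹) ^ 2) + x1 * x2 = 0 ∧ 1 + x2 * x3 = 0 ∧ 1 + x3 * x1 = 0) ∧
    {u : F | ∃ x1 x2 x3 : F, u + x1 * x2 = 0 ∧ 1 + x2 * x3 = 0 ∧ 1 + x3 * x1 = 0}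
      = {z : F | ∃ y : F, y ≠ 0 ∧ z = -(y ^ 2)} := by
  have key : ∀ x1 x2 x3 u : F, u + x1 * x2 = 0 → 1 + x2 * x3 = 0 → 1 + x3 * x1 = 0 →
      x3 ≠ 0 ∧ u = -(x3⁻¹) ^ 2 := by
    intro x1 x2 x3 u h1 h2 h3
    have hx3 : x3 ≠ 0 := by
      intro h; rw [h] at h2; simp at h2
    refine ⟨hx3, ?_⟩
    have hx2 : x2 = -x3⁻¹ := by
      field_simp
      linear_combination h2
    have hx1 : x1 = -x3⁻¹ := by
      field_simp
      linear_combination h3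
    rw [hx1, hx2] at h1
    linear_combination h1
  have conv : ∀ y : F, y ≠ 0 → ∃ x1 x2 x3 : F,
      (-(y⁻¹) ^ 2) + x1 * x2 = 0 ∧ 1 + x2 * x3 = 0 ∧ 1 + x3 * x1 = 0 := by
    intro y hy
    exact ⟨-y⁻¹, -y⁻¹, y, by field_simp; ring, by field_simp; ring, by field_simp; ring⟩
  refine ⟨key, conv, ?_⟩
  ext u
  simp only [Set.mem_setOf_eq]
  constructor
  · rintro ⟨x1, x2, x3, h1, h2, h3⟩
    obtain ⟨hx3, hu⟩ := key x1 x2 x3 u h1 h2 h3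
    exact ⟨x3⁻¹, inv_ne_zero hx3, hu⟩
  · rintro ⟨y, hy, rfl⟩
    obtain ⟨x1, x2, x3, h1, h2, h3⟩ := conv y⁻¹ (inv_ne_zero hy)
    rw [inv_inv] at h1
    exact ⟨x1, x2, x3, h1, h2, h3⟩
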